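/- Let g : [1,∞) → (0,∞) be continuous and differentiable with lim_{x→∞} g'(x)x/g(x) = 1−λ for some λ > 0, and let G(x) = ∫₁^x dy/g(y) with inverse G⁻¹. Define ℓ_α(x) = (G⁻¹(x))^α. If α > λ, then ℓ_α is convex on [x₀,∞) for some x₀ > 0. -/

import Mathlib

open Set Filter intervalIntegral MeasureTheory

theorem ell_alpha_ultimately_convex (g G Ginv : ℝ → ℝ) (lam α : ℝ)
    (hlam : 0 < lam) (hα : lam < α)
    (hgpos : ∀ x ≥ (1:ℝ), 0 < g x)
    (hgcont : ContinuousOn g (Set.Ici 1))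
    (hgdiff : ∀ x ≥ (1:ℝ), DifferentiableAt ℝ g x)
    (hlim : Filter.Tendsto (fun x => deriv g x * x / g x) Filter.atTop (nhds (1 - lam)))
    (hG : ∀ x ≥ (1:ℝ), G x = ∫ y in (1:ℝ)..x, 1 / g y)
    (hGinvG : ∀ x ≥ (1:ℝ), Ginv (G x) = x)
    (hGGinv : ∀ y ≥ (0:ℝ), 1 ≤ Ginv y ∧ G (Ginv y) = y) :
    ∃ x₀ > (0:ℝ), ConvexOn ℝ (Set.Ici x₀) (fun x => Ginv x ^ α) := by
  have hαpos : (0:ℝ) < α := hlam.trans hα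
  -- continuity of 1/g on Ici 1
  have hinvg_cont : ContinuousOn (fun y => 1 / g y) (Set.Ici 1) :=
    continuousOn_const.div hgcont fun y hy => (hgpos y hy).ne'
  -- interval integrability of 1/g
  have hintg : ∀ a b : ℝ, 1 ≤ a → 1 ≤ b →
      IntervalIntegrable (fun y => 1 / g y) volume a b := fun a b ha hb =>
    (hinvg_cont.mono (Set.ordConnected_Ici.uIcc_subset ha hb)).intervalIntegrable
  -- G is strictly monotone on Ici 1
  have hGmono : StrictMonoOn G (Set.Ici 1) := by
    intro x hx y hy hxy
    have hx1 : (1:ℝ) ≤ x := hx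
    have hy1 : (1:ℝ) ≤ y := hy
    have hadj : (∫ t in (1:ℝ)..x, 1 / g t) + ∫ t in x..y, 1 / g t
        = ∫ t in (1:ℝ)..y, 1 / g t :=
      integral_add_adjacent_intervals (hintg 1 x le_rfl hx1) (hintg x y hx1 hy1)
    have hpos : 0 < ∫ t in x..y, 1 / g t := by
      apply intervalIntegral.intervalIntegral_pos_of_pos_on (hintg x y hx1 hy1)
      · intro t ht
        exact one_div_pos.2 (hgpos t (hx1.trans ht.1.le))
      · exact hxy
    rw [hG x hx1, hG y hy1, ← hadj]
    linarith
  -- G is nonnegative on Ici 1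
  have hGnonneg : ∀ x ≥ (1:ℝ), 0 ≤ G x := by
    intro x hx
    rw [hG x hx]
    apply intervalIntegral.integral_nonneg hx
    intro t ht
    exact (one_div_pos.2 (hgpos t ht.1)).le
  have hG1 : G 1 = 0 := by rw [hG 1 le_rfl, intervalIntegral.integral_same]
  have hGpos : ∀ x > (1:ℝ), 0 < G x := fun x hx => hG1 ▸ hGmono (Set.mem_Ici.2 le_rfl) hx.le hx
  -- Ginv is monotone on Ici 0
  have hGinvmono : ∀ y₁ ≥ (0:ℝ), ∀ y₂ ≥ (0:ℝ), y₁ ≤ y₂ → Ginv y₁ ≤ Ginv y₂ := by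
    intro y₁ h₁ y₂ h₂ h12
    by_contra hlt
    push_neg at hlt
    have := hGmono (hGGinv y₂ h₂).1 (hGGinv y₁ h₁).1 hlt
    rw [(hGGinv y₁ h₁).2, (hGGinv y₂ h₂).2] at this
    linarith
  -- Ginv is strictly monotone on Ioi 0
  have hGinvsmono : StrictMonoOn Ginv (Set.Ioi 0) := by
    intro y₁ h₁ y₂ h₂ h12
    rcases lt_or_ge (Ginv y₁) (Ginv y₂) with h | h
    · exact h
    · exfalso
      have h1' := (hGGinv y₁ (le_of_lt h₁))
      have h2' := (hGGinv y₂ (le_of_lt h₂))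
      rcases eq_or_lt_of_le h with heq | hlt
      · rw [← h1'.2, ← h2'.2, ← heq] at h12; exact lt_irrefl _ h12
      · have := hGmono h2'.1 h1'.1 hlt
        rw [h1'.2, h2'.2] at this; linarith
  -- Ginv is continuous at every x > 0
  have hGinvcont : ∀ x > (0:ℝ), Ginv x > 1 → ContinuousAt Ginv x := by
    intro x hx hx1
    apply hGinvsmono.continuousAt_of_image_mem_nhds (Ioi_mem_nhds hx)
    have hsub : Set.Ioi (1:ℝ) ⊆ Ginv '' Set.Ioi 0 := by
      intro u hu
      exact ⟨G u, hGpos u hu, hGinvG u (le_of_lt hu)⟩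
    exact Filter.mem_of_superset (Ioi_mem_nhds hx1) hsub
  -- choose M from the limit hypothesis
  have hev : ∀ᶠ u in Filter.atTop, deriv g u * u / g u > 1 - α :=
    hlim.eventually (eventually_gt_nhds (by linarith))
  obtain ⟨M₀, hM₀⟩ := Filter.eventually_atTop.1 hev
  set M : ℝ := max 2 M₀ with hMdef
  have hM2 : (2:ℝ) ≤ M := le_max_left _ _
  have hM1 : (1:ℝ) ≤ M := by linarith
  have hMbig : ∀ u ≥ M, deriv g u * u / g u > 1 - α := fun u hu =>
    hM₀ u ((le_max_right _ _).trans hu)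
  -- key inequality : (α-1) g u + u deriv g u > 0 for u ≥ M
  have hkey : ∀ u ≥ M, 0 ≤ (α - 1) * g u + u * deriv g u := by
    intro u hu
    have hgu : 0 < g u := hgpos u (hM1.trans hu)
    have := hMbig u hu
    rw [gt_iff_lt, lt_div_iff₀ hgu] at this
    nlinarith
  -- the function ψ u = α * u ^ (α-1) * g u  (will be deriv of ℓ ∘ Ginv)
  set ψ : ℝ → ℝ := fun u => α * u ^ (α - 1) * g u with hψdef
  -- ψ has an explicit derivative for u > 1
  have hψderiv : ∀ u > (1:ℝ),
      HasDerivAt ψ (α * ((α - 1) * u ^ (α - 2) * g u + u ^ (α - 1) * deriv g u)) u := by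
    intro u hu
    have hu0 : u ≠ 0 := by linarith
    have h1 : HasDerivAt (fun v : ℝ => v ^ (α - 1)) ((α - 1) * u ^ (α - 1 - 1)) u :=
      Real.hasDerivAt_rpow_const (Or.inl hu0)
    have h2 : HasDerivAt g (deriv g u) u := (hgdiff u hu.le).hasDerivAt
    have h3 := (h1.mul h2).const_mul α
    have : α - 1 - 1 = α - 2 := by ring
    rw [this] at h3
    simpa [hψdef, mul_assoc] using h3
  -- ψ is monotone on Ici M
  have hψmono : MonotoneOn ψ (Set.Ici M) := by
    apply monotoneOn_of_deriv_nonneg (convex_Ici M)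
    · -- continuity
      apply ContinuousOn.mul
      apply ContinuousOn.mul continuousOn_const
      · intro u hu
        exact (Real.continuousAt_rpow_const u (α - 1)
          (Or.inl (by intro h; rw [h] at hu; simp at hu; linarith))).continuousWithinAt
      · exact hgcont.mono fun u hu => hM1.trans hu
    · intro u hu
      rw [interior_Ici] at hu
      exact ((hψderiv u (by linarith [hu.out])).differentiableAt).differentiableWithinAt
    · intro u hu
      rw [interior_Ici] at hu
      have huM : M < u := hu
      have hu1 : (1:ℝ) < u := by linarith
      have hu0 : (0:ℝ) < u := by linarith
      rw [(hψderiv u hu1).deriv]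
      have hfac : u ^ (α - 1) = u ^ (α - 2) * u := by
        rw [← Real.rpow_add_one hu0.ne' (α - 2)]
        congr 1
        ring
      have hp : (0:ℝ) < u ^ (α - 2) := Real.rpow_pos_of_pos hu0 _
      have hk := hkey u huM.le
      calc (0:ℝ) ≤ α * (u ^ (α - 2) * ((α - 1) * g u + u * deriv g u)) := by positivity
        _ = α * ((α - 1) * u ^ (α - 2) * g u + u ^ (α - 1) * deriv g u) := by
            rw [hfac]; ring
  -- choose x₀
  refine ⟨G M + 1, by linarith [hGnonneg M hM1], ?_⟩
  set x₀ : ℝ := G M + 1 with hx₀def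
  have hx₀pos : (0:ℝ) < x₀ := by
    have := hGnonneg M hM1; simp only [hx₀def]; linarith
  have hGinvM : ∀ x ≥ x₀, M ≤ Ginv x := by
    intro x hx
    have h1 : Ginv (G M) = M := hGinvG M hM1
    have h2 : G M ≤ x := by simp only [hx₀def] at hx; linarith
    calc M = Ginv (G M) := h1.symm
      _ ≤ Ginv x := hGinvmono _ (hGnonneg M hM1) _ (by linarith [hGnonneg M hM1]) h2
  -- the derivative of ℓ
  have hℓderiv : ∀ x ≥ x₀, HasDerivAt (fun x => Ginv x ^ α) (ψ (Ginv x)) x := by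
    intro x hx
    have hxpos : 0 < x := lt_of_lt_of_le hx₀pos hx
    set u : ℝ := Ginv x with hudef
    have huM : M ≤ u := hGinvM x hx
    have hu1 : (1:ℝ) < u := by linarith
    have hu0 : (0:ℝ) < u := by linarith
    have hgu : 0 < g u := hgpos u hu1.le
    -- G has derivative 1 / g u at u
    have hGder : HasDerivAt G (1 / g u) u := by
      have hint : HasDerivAt (fun v => ∫ y in (1:ℝ)..v, 1 / g y) (1 / g u) u := by
        apply intervalIntegral.integral_hasDerivAt_right (hintg 1 u le_rfl hu1.le)
        · exact ContinuousOn.stronglyMeasurableAtFilter isOpen_Ioi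
            (hinvg_cont.mono (fun v hv => le_of_lt hv)) u hu1
        · exact (hinvg_cont.continuousAt (Ici_mem_nhds hu1))
      apply hint.congr_of_eventuallyEq
      filter_upwards [Ici_mem_nhds hu1] with v hv
      exact hG v hv
    -- Ginv has derivative g u at x
    have hGinvder : HasDerivAt Ginv (g u) x := by
      have hcont : ContinuousAt Ginv x := hGinvcont x hxpos hu1
      have hfg : ∀ᶠ y in nhds x, G (Ginv y) = y := by
        filter_upwards [Ioi_mem_nhds hxpos] with y hy
        exact (hGGinv y (le_of_lt hy)).2
      have := HasDerivAt.of_local_left_inverse hcont hGder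
        (one_div_ne_zero hgu.ne') hfg
      simpa [one_div, inv_inv] using this
    -- compose with rpow
    have hr : HasDerivAt (fun v : ℝ => v ^ α) (α * u ^ (α - 1)) u :=
      Real.hasDerivAt_rpow_const (Or.inl hu0.ne')
    have := hr.comp x hGinvder
    simpa [hψdef, mul_comm, mul_assoc, mul_left_comm, Function.comp_def] using this
  -- assemble the convexity
  apply MonotoneOn.convexOn_of_deriv (convex_Ici x₀)
  · intro x hx
    exact ((hℓderiv x hx).differentiableAt).continuousAt.continuousWithinAt
  · intro x hx
    rw [interior_Ici] at hx
    exact ((hℓderiv x (le_of_lt hx)).differentiableAt).differentiableWithinAt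
  · intro x hx y hy hxy
    rw [interior_Ici] at hx hy
    rw [(hℓderiv x (le_of_lt hx)).deriv, (hℓderiv y (le_of_lt hy)).deriv]
    have hx0 : (0:ℝ) ≤ x := (hx₀pos.trans hx).le
    have hy0 : (0:ℝ) ≤ y := (hx₀pos.trans hy).le
    exact hψmono (hGinvM x (le_of_lt hx)) (hGinvM y (le_of_lt hy))
      (hGinvmono x hx0 y hy0 hxy)
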